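/- Let G be a finite additive abelian group and let B : G × G → ℂ be a map such that: B(g+g', h) = B(g,h)·B(g',h) for all g,g',h ∈ G (biadditivity in the first, hence by symmetry in both, variables); B(g,h) = B(h,g) for all g,h; |B(g,h)| = 1 for all g,h; and B is non-degenerate, i.e., if B(g,h) = 1 for all h ∈ G then g = 0. Then the |G| × |G| complex matrix S with entries S_{g,h} = B(g,h)^{−1} / √|G| is unitary: S · S^† = I, where S^† is the conjugate transpose. -/

import Mathlib

/-- For a finite abelian group `G` with a symmetric, biadditive, unimodular and
non-degenerate pairing `B : G × G → ℂ`, the matrix `S_{g,h} = B(g,h)⁻¹ / √|G|`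
is unitary.  This is the modularity of the pointed category `𝒞(G,q)` associated
to a metric group. -/
theorem pointed_S_matrix_unitary (G : Type*) [AddCommGroup G] [Fintype G] [DecidableEq G]
    (B : G → G → ℂ)
    (hbil : ∀ g g' h : G, B (g + g') h = B g h * B g' h)
    (hsymm : ∀ g h : G, B g h = B h g)
    (habs : ∀ g h : G, ‖B g h‖ = 1)
    (hnd : ∀ g : G, (∀ h : G, B g h = 1) → g = 0) :
    (Matrix.of fun g h : G => (B g h)⁻¹ / (Real.sqrt (Fintype.card G) : ℂ)) *
      (Matrix.of fun g h : G => (B g h)⁻¹ / (Real.sqrt (Fintype.card G) : ℂ)).conjTranspose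
      = 1 := by
  have hne : ∀ g h : G, B g h ≠ 0 := by
    intro g h h0
    have := habs g h
    rw [h0] at this; simp at this
  have hB0 : ∀ h : G, B 0 h = 1 := by
    intro h
    have h1 : B 0 h * 1 = B 0 h * B 0 h := by
      rw [mul_one, ← hbil]; simp
    exact (mul_left_cancel₀ (hne 0 h) h1).symm
  have hneg : ∀ g h : G, B (-g) h = (B g h)⁻¹ := by
    intro g h
    have h1 : B g h * B (-g) h = 1 := by rw [← hbil]; simp [hB0]
    exact eq_inv_of_mul_eq_one_right h1
  have hconj : ∀ g h : G, (starRingEnd ℂ) (B g h) = (B g h)⁻¹ := by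
    intro g h
    have h1 : (starRingEnd ℂ) (B g h) * B g h = 1 := by
      rw [mul_comm, Complex.mul_conj]
      norm_cast
      rw [Complex.normSq_eq_norm_sq, habs]; norm_num
    exact eq_inv_of_mul_eq_one_left h1
  have hbil2 : ∀ a x y : G, B a (x + y) = B a x * B a y := by
    intro a x y
    rw [hsymm, hbil, hsymm x, hsymm y]
  have hsum : ∀ a : G, a ≠ 0 → ∑ h : G, B a h = 0 := by
    intro a ha
    obtain ⟨h₀, hh₀⟩ : ∃ h₀, B a h₀ ≠ 1 := by
      by_contra hc
      push_neg at hc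
      exact ha (hnd a hc)
    have key : B a h₀ * ∑ h : G, B a h = ∑ h : G, B a h := by
      rw [Finset.mul_sum]
      calc ∑ h : G, B a h₀ * B a h = ∑ h : G, B a (h₀ + h) := by
            simp [hbil2]
        _ = ∑ h : G, B a h := Fintype.sum_equiv (Equiv.addLeft h₀) _ _ (fun h => rfl)
    by_contra hs
    nth_rewrite 2 [← one_mul (∑ h : G, B a h)] at key
    exact hh₀ (mul_right_cancel₀ hs key)
  have hcard : (0 : ℝ) < (Fintype.card G : ℝ) := by
    exact_mod_cast Fintype.card_pos
  have hs2 : ((Real.sqrt (Fintype.card G) : ℝ) : ℂ) * ((Real.sqrt (Fintype.card G) : ℝ) : ℂ)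
      = (Fintype.card G : ℂ) := by
    norm_cast
    exact Real.mul_self_sqrt hcard.le
  have hsne : ((Real.sqrt (Fintype.card G) : ℝ) : ℂ) ≠ 0 := by
    exact Complex.ofReal_ne_zero.mpr (Real.sqrt_pos.mpr hcard).ne'
  ext g k
  rw [Matrix.mul_apply]
  simp only [Matrix.conjTranspose_apply, Matrix.of_apply, star_div₀, star_inv₀]
  have hentry : ∀ h : G, ((B g h)⁻¹ / ((Real.sqrt (Fintype.card G) : ℝ) : ℂ)) *
      ((star (B k h))⁻¹ / star ((Real.sqrt (Fintype.card G) : ℝ) : ℂ))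
      = B (k - g) h / (Fintype.card G : ℂ) := by
    intro h
    have : (star (B k h))⁻¹ = B k h := by
      rw [show (star (B k h)) = (starRingEnd ℂ) (B k h) from rfl, hconj, inv_inv]
    rw [this, Complex.star_def, Complex.conj_ofReal]
    rw [div_mul_div_comm, hs2, sub_eq_add_neg, hbil, hneg, mul_comm (B k h)]
  rw [Finset.sum_congr rfl (fun h _ => hentry h), ← Finset.sum_div]
  by_cases hgk : g = k
  · subst hgk
    simp [hB0, Matrix.one_apply_eq]
  · rw [hsum _ (sub_ne_zero.mpr (Ne.symm hgk)), Matrix.one_apply_ne hgk]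
    simp
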